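/- Let F = GF(2) be the field with two elements and let Q₈ be the quaternion group of order 8 (generated by a, b with a⁴ = 1, a² = b², a b a⁻¹ = b⁻¹). Then the group algebra F[Q₈] is a noncommutative centrally essential ring (of cardinality 256). -/

import Mathlib

open MonoidAlgebra

/-- A ring `R` is *centrally essential* if for every nonzero `r ∈ R` there is a central
element `c` such that `c * r` is a nonzero central element. -/
def IsCentrallyEssential (R : Type*) [Ring R] : Prop :=
  ∀ r : R, r ≠ 0 → ∃ c ∈ Subring.center R, c * r ≠ 0 ∧ c * r ∈ Subring.center R

abbrev Q8 := QuaternionGroup 2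
abbrev R2 := MonoidAlgebra (ZMod 2) Q8

/-- the central involution a² -/
abbrev zq : Q8 := QuaternionGroup.a 2

lemma q8_cases (g h : Q8) :
    (h * g = g * h ∧ h * (zq * g) = zq * g * h) ∨
    (h * g = zq * g * h ∧ h * (zq * g) = g * h) := by revert g h; decide

lemma zq_inv : zq⁻¹ = zq := by decide

lemma q8_conj (h k : Q8) : k * h⁻¹ = h⁻¹ * k ∨ k * h⁻¹ = zq * (h⁻¹ * k) := by
  revert h k; decide

noncomputable def w : R2 :=
  MonoidAlgebra.single (1 : Q8) 1 + MonoidAlgebra.single zq 1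

lemma w_mul_single (g : Q8) (c : ZMod 2) :
    w * MonoidAlgebra.single g c
      = MonoidAlgebra.single g c + MonoidAlgebra.single (zq * g) c := by
  simp [w, add_mul, MonoidAlgebra.single_mul_single]

lemma single_case (g h : Q8) (c d : ZMod 2) :
    MonoidAlgebra.single h d * (w * MonoidAlgebra.single g c)
      = (w * MonoidAlgebra.single g c) * MonoidAlgebra.single h d := by
  rw [w_mul_single, mul_add, add_mul, MonoidAlgebra.single_mul_single,
    MonoidAlgebra.single_mul_single, MonoidAlgebra.single_mul_single,
    MonoidAlgebra.single_mul_single, mul_comm d c]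
  rcases q8_cases g h with ⟨h1, h2⟩ | ⟨h1, h2⟩
  · rw [h1, h2]
  · rw [h1, h2, add_comm]

lemma central_single (g : Q8) (c : ZMod 2) :
    w * MonoidAlgebra.single g c ∈ Subring.center R2 := by
  rw [Subring.mem_center_iff]
  intro b
  induction b using MonoidAlgebra.induction with
  | zero => simp
  | single_add h d f hh hd ih =>
    rw [add_mul, mul_add, ih, single_case]

lemma wmul_central (x : R2) : w * x ∈ Subring.center R2 := by
  induction x using MonoidAlgebra.induction with
  | zero => simpa using Subring.zero_mem (Subring.center R2)
  | single_add g c f hg hc ih =>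
    rw [mul_add]
    exact Subring.add_mem _ (central_single g c) ih

lemma w_central : w ∈ Subring.center R2 := by
  simpa using wmul_central 1

lemma coeff_of_wmul_zero {r : R2} (hw : w * r = 0) (k : Q8) : r.coeff (zq * k) = r.coeff k := by
  have h0 : (w * r).coeff k = 0 := by rw [hw]; rfl
  rw [w, add_mul, MonoidAlgebra.coeff_add, Finsupp.add_apply, MonoidAlgebra.coeff_single_mul_apply,
    MonoidAlgebra.coeff_single_mul_apply, inv_one, one_mul, zq_inv, one_mul, one_mul] at h0
  have key : ∀ a b : ZMod 2, a + b = 0 → b = a := by decide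
  exact key _ _ h0

lemma wmul_eq_zero {r : R2} (hw : w * r = 0) : r ∈ Subring.center R2 := by
  rw [Subring.mem_center_iff]
  intro b
  induction b using MonoidAlgebra.induction with
  | zero => simp
  | single_add h d f hh hd ih =>
    rw [add_mul, mul_add, ih]
    congr 1
    ext k
    rw [MonoidAlgebra.coeff_single_mul_apply, MonoidAlgebra.coeff_mul_single_apply, mul_comm d]
    congr 1
    rcases q8_conj h k with he | he
    · rw [he]
    · rw [he, coeff_of_wmul_zero hw]

theorem quaternion_group_algebra_centrally_essential :
    IsCentrallyEssential (MonoidAlgebra (ZMod 2) (QuaternionGroup 2)) ∧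
    (∃ x y : MonoidAlgebra (ZMod 2) (QuaternionGroup 2), x * y ≠ y * x) ∧
    Nat.card (MonoidAlgebra (ZMod 2) (QuaternionGroup 2)) = 256 := by
  refine ⟨?_, ?_, ?_⟩
  · intro r hr
    by_cases hc : r ∈ Subring.center R2
    · exact ⟨1, Subring.one_mem _, by simpa using hr, by simpa using hc⟩
    · exact ⟨w, w_central, fun h0 => hc (wmul_eq_zero h0), wmul_central r⟩
  · refine ⟨MonoidAlgebra.single (QuaternionGroup.a 1) 1,
      MonoidAlgebra.single (QuaternionGroup.xa 0) 1, ?_⟩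
    rw [MonoidAlgebra.single_mul_single, MonoidAlgebra.single_mul_single]
    rw [Ne, MonoidAlgebra.single_inj]
    have hne : (QuaternionGroup.a 1 * QuaternionGroup.xa 0 : Q8)
        ≠ QuaternionGroup.xa 0 * QuaternionGroup.a 1 := by decide
    rintro (⟨h1, -⟩ | ⟨h1, -⟩)
    · exact hne h1
    · exact one_ne_zero h1
  · have e : MonoidAlgebra (ZMod 2) Q8 ≃ (Q8 → ZMod 2) :=
      MonoidAlgebra.coeffEquiv.trans Finsupp.equivFunOnFinite
    rw [Nat.card_congr e, Nat.card_eq_fintype_card, Fintype.card_fun, ZMod.card,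
      QuaternionGroup.card]
    norm_num
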